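/- Let u be a C³ harmonic function on an open set Ω ⊆ ℝⁿ \ {0} and define v(y) = u(y)/|y| − ⟨∇u(y), y⟩/|y|. Then v satisfies the elliptic equation Δv(y) + (2/|y|²)·⟨y, ∇v(y)⟩ + ((n−1)/|y|²)·v(y) = 0 on Ω. -/

import Mathlib

open RealInnerProductSpace

noncomputable def lap {n : ℕ} (u : EuclideanSpace ℝ (Fin n) → ℝ)
    (x : EuclideanSpace ℝ (Fin n)) : ℝ :=
  ∑ i : Fin n, fderiv ℝ (fun y => fderiv ℝ u y (EuclideanSpace.single i 1)) x
    (EuclideanSpace.single i 1)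

section Aux
variable {n : ℕ}
local notation "E" => EuclideanSpace ℝ (Fin n)

noncomputable def ee (n : ℕ) (i : Fin n) : EuclideanSpace ℝ (Fin n) :=
  EuclideanSpace.single i 1

theorem lap_eq {n : ℕ} (f : EuclideanSpace ℝ (Fin n) → ℝ) (x : EuclideanSpace ℝ (Fin n)) :
    lap f x = ∑ i : Fin n, fderiv ℝ (fun y => fderiv ℝ f y (ee n i)) x (ee n i) := rfl

theorem clm_expand (ℓ : E →L[ℝ] ℝ) (y : E) :
    ℓ y = ∑ i, y i * ℓ (ee n i) := by
  have hy : y = ∑ i, y i • (ee n i : E) := by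
    ext j
    rw [WithLp.ofLp_sum, Finset.sum_apply]
    simp [ee, EuclideanSpace.single_apply]
  conv_lhs => rw [hy]
  rw [map_sum]
  simp

theorem norm_hasFDerivAt {y : E} (hy : y ≠ 0) :
    HasFDerivAt (fun z : E => ‖z‖) ((‖y‖⁻¹) • innerSL ℝ y) y := by
  have hq : HasFDerivAt (fun z : E => ⟪z, z⟫) ((2 : ℝ) • innerSL ℝ y) y := by
    have := (hasFDerivAt_id y).inner ℝ (hasFDerivAt_id y)
    refine this.congr_fderiv ?_
    ext h
    simp only [ContinuousLinearMap.smul_apply, innerSL_apply_apply, ContinuousLinearMap.comp_apply,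
      ContinuousLinearMap.prod_apply, ContinuousLinearMap.coe_id', id_eq, fderivInnerCLM_apply,
      smul_eq_mul]
    rw [real_inner_comm y h]
    ring
  have hny : ‖y‖ ≠ 0 := norm_ne_zero_iff.mpr hy
  have hqy : (⟪y, y⟫ : ℝ) ≠ 0 := by
    rw [real_inner_self_eq_norm_sq]; positivity
  have hs : HasDerivAt Real.sqrt (1 / (2 * Real.sqrt ⟪y, y⟫)) ⟪y, y⟫ :=
    Real.hasDerivAt_sqrt hqy
  have hcomp : HasFDerivAt (fun z : E => Real.sqrt ⟪z, z⟫)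
      ((1 / (2 * Real.sqrt ⟪y, y⟫)) • ((2 : ℝ) • innerSL ℝ y)) y :=
    hs.comp_hasFDerivAt (f := fun z : E => (⟪z, z⟫ : ℝ)) y hq
  have heq : (fun z : E => Real.sqrt ⟪z, z⟫) = fun z : E => ‖z‖ := by
    funext z; rw [real_inner_self_eq_norm_sq, Real.sqrt_sq (norm_nonneg _)]
  rw [heq] at hcomp
  convert hcomp using 1
  rw [real_inner_self_eq_norm_sq, Real.sqrt_sq (norm_nonneg _), smul_smul]
  congr 1
  field_simp

theorem inv_norm_hasFDerivAt {y : E} (hy : y ≠ 0) :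
    HasFDerivAt (fun z : E => ‖z‖⁻¹) ((-(‖y‖⁻¹ ^ 3)) • innerSL ℝ y) y := by
  have hny : ‖y‖ ≠ 0 := norm_ne_zero_iff.mpr hy
  have hinv : HasDerivAt (fun t : ℝ => t⁻¹) (-(‖y‖ ^ 2)⁻¹) ‖y‖ := hasDerivAt_inv hny
  have hcomp : HasFDerivAt (fun z : E => ‖z‖⁻¹)
      ((-(‖y‖ ^ 2)⁻¹) • ((‖y‖⁻¹) • innerSL ℝ y)) y :=
    hinv.comp_hasFDerivAt (f := fun z : E => ‖z‖) y (norm_hasFDerivAt hy)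
  convert hcomp using 1
  rw [smul_smul]
  congr 1
  field_simp

end Aux

set_option maxHeartbeats 1000000 in
/-- Let `u` be a `C³` harmonic function on an open set `Ω ⊆ ℝⁿ \ {0}` and
`v y = u y / |y| - ⟨∇u y, y⟩ / |y|`. Then
`Δv y + (2/|y|²)⟨y, ∇v y⟩ + ((n-1)/|y|²) v y = 0` on `Ω`. -/
theorem stmt6 {n : ℕ} {Ω : Set (EuclideanSpace ℝ (Fin n))} (hΩ : IsOpen Ω)
    (hΩ0 : (0 : EuclideanSpace ℝ (Fin n)) ∉ Ω)
    {u : EuclideanSpace ℝ (Fin n) → ℝ} (hu : ContDiffOn ℝ 3 u Ω)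
    (hharm : ∀ x ∈ Ω, lap u x = 0)
    (v : EuclideanSpace ℝ (Fin n) → ℝ)
    (hv : ∀ y, v y = u y / ‖y‖ - ⟪gradient u y, y⟫ / ‖y‖) :
    ∀ y ∈ Ω,
      lap v y + (2 / ‖y‖ ^ 2) * ⟪y, gradient v y⟫ + (((n : ℝ) - 1) / ‖y‖ ^ 2) * v y
        = 0 := by
  classical
  set B : EuclideanSpace ℝ (Fin n) → EuclideanSpace ℝ (Fin n) →L[ℝ]
      EuclideanSpace ℝ (Fin n) →L[ℝ] ℝ := fderiv ℝ (fderiv ℝ u) with hB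
  set W : EuclideanSpace ℝ (Fin n) → ℝ := fun z => u z - fderiv ℝ u z z with hW
  have hveq : v = fun z => W z * ‖z‖⁻¹ := by
    funext z
    rw [hv z]
    have : ⟪gradient u z, z⟫ = fderiv ℝ u z z := InnerProductSpace.toDual_symm_apply
    rw [this]
    simp [hW, sub_div, div_eq_mul_inv, sub_mul]
  have H1 : ∀ z ∈ Ω, ContDiffAt ℝ 3 u z := fun z hz => hu.contDiffAt (hΩ.mem_nhds hz)
  have H2 : ∀ z ∈ Ω, HasFDerivAt u (fderiv ℝ u z) z := fun z hz =>
    ((H1 z hz).differentiableAt (by norm_num)).hasFDerivAt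
  have H3 : ∀ z ∈ Ω, HasFDerivAt (fderiv ℝ u) (B z) z := fun z hz =>
    (((H1 z hz).fderiv_right (m := 2) (by norm_num)).differentiableAt (by norm_num)).hasFDerivAt
  have H4 : ∀ z ∈ Ω, HasFDerivAt B (fderiv ℝ B z) z := fun z hz =>
    ((((H1 z hz).fderiv_right (m := 2) (by norm_num)).fderiv_right (m := 1)
      (by norm_num)).differentiableAt (by norm_num)).hasFDerivAt
  have Hsym : ∀ z ∈ Ω, ∀ a b, B z a b = B z b a := fun z hz =>
    (H1 z hz).isSymmSndFDerivAt (by norm_num)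
  have hzero : ∀ z ∈ Ω, z ≠ 0 := fun z hz h => hΩ0 (h ▸ hz)
  have HWd : ∀ z ∈ Ω, HasFDerivAt W (-((B z).flip z)) z := by
    intro z hz
    have h := (H2 z hz).fun_sub ((H3 z hz).clm_apply (hasFDerivAt_id z))
    refine h.congr_fderiv ?_
    ext k
    simp [ContinuousLinearMap.flip_apply]
  have HV : ∀ z ∈ Ω, HasFDerivAt v
      ((-(‖z‖⁻¹)) • (B z z) + (-(W z * ‖z‖⁻¹ ^ 3)) • innerSL ℝ z) z := by
    intro z hz
    have h := (HWd z hz).fun_mul (inv_norm_hasFDerivAt (hzero z hz))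
    rw [hveq]
    refine h.congr_fderiv ?_
    ext k
    simp only [ContinuousLinearMap.add_apply, ContinuousLinearMap.smul_apply,
      ContinuousLinearMap.neg_apply, ContinuousLinearMap.flip_apply, innerSL_apply_apply,
      smul_eq_mul]
    rw [Hsym z hz k z]
    ring
  have HVs : ∀ z ∈ Ω, ∀ k, fderiv ℝ v z k
      = -(‖z‖⁻¹ * B z z k) - W z * ‖z‖⁻¹ ^ 3 * ⟪z, k⟫ := by
    intro z hz k
    rw [(HV z hz).fderiv]
    simp only [ContinuousLinearMap.add_apply, ContinuousLinearMap.smul_apply,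
      innerSL_apply_apply, smul_eq_mul]
    ring
  -- the Laplacian of u in terms of B
  have hlap_sum : ∀ z ∈ Ω, lap u z = ∑ i, B z (ee n i)
      (ee n i) := by
    intro z hz
    rw [lap_eq]
    refine Finset.sum_congr rfl fun i _ => ?_
    have h := (H3 z hz).clm_apply
      (hasFDerivAt_const (ee n i) z)
    rw [h.fderiv]
    simp
  intro y hy
  have hy0 : y ≠ 0 := hzero y hy
  have hne : ‖y‖ ≠ 0 := norm_ne_zero_iff.mpr hy0
  set C : EuclideanSpace ℝ (Fin n) →L[ℝ] EuclideanSpace ℝ (Fin n) →L[ℝ]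
      EuclideanSpace ℝ (Fin n) →L[ℝ] ℝ := fderiv ℝ B y with hC
  have PSI : ∀ i : Fin n, fderiv ℝ (fun z => fderiv ℝ v z (ee n i)) y
        (ee n i)
      = -(‖y‖⁻¹ * (B y (ee n i) (ee n i)
          + C (ee n i) y (ee n i)))
        + ‖y‖⁻¹ ^ 3 * ⟪y, ee n i⟫
            * B y y (ee n i)
        - W y * ‖y‖⁻¹ ^ 3 * ⟪ee n i, ee n i⟫
        - ⟪y, ee n i⟫
            * (W y * (-(3 * ‖y‖⁻¹ ^ 5 * ⟪y, ee n i⟫))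
              + ‖y‖⁻¹ ^ 3 * (-(B y (ee n i) y))) := by
    intro i
    have EV : (fun z => fderiv ℝ v z (ee n i))
        =ᶠ[nhds y] (fun z => -(‖z‖⁻¹ * B z z (ee n i))
          - W z * ‖z‖⁻¹ ^ 3 * ⟪z, ee n i⟫) := by
      filter_upwards [hΩ.mem_nhds hy] with z hz
      exact HVs z hz (ee n i)
    rw [EV.fderiv_eq]
    have Ha := inv_norm_hasFDerivAt hy0
    have Hp : HasDerivAt (fun t : ℝ => t ^ 3) (3 * ‖y‖⁻¹ ^ 2) ‖y‖⁻¹ := by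
      simpa using hasDerivAt_pow 3 (‖y‖⁻¹)
    have Ha3 : HasFDerivAt (fun z : EuclideanSpace ℝ (Fin n) => ‖z‖⁻¹ ^ 3)
        ((3 * ‖y‖⁻¹ ^ 2) • ((-(‖y‖⁻¹ ^ 3)) • innerSL ℝ y)) y :=
      Hp.comp_hasFDerivAt (f := fun z : EuclideanSpace ℝ (Fin n) => ‖z‖⁻¹) y Ha
    have Hb : HasFDerivAt (fun z => B z z (ee n i))
        (((B y).comp (ContinuousLinearMap.id ℝ _) + C.flip y).flip
          (ee n i)) y := by
      have h := ((H4 y hy).clm_apply (hasFDerivAt_id y)).clm_apply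
        (hasFDerivAt_const (ee n i) y)
      refine h.congr_fderiv ?_
      ext h'
      simp [ContinuousLinearMap.flip_apply, hC]
    have Hd : HasFDerivAt
        (fun z : EuclideanSpace ℝ (Fin n) => (⟪z, ee n i⟫ : ℝ))
        ((innerSL ℝ (E := EuclideanSpace ℝ (Fin n))).flip (ee n i)) y :=
      ((innerSL ℝ (E := EuclideanSpace ℝ (Fin n))).flip
        (ee n i)).hasFDerivAt
    have HPhi := ((Ha.fun_mul Hb).fun_neg).fun_sub (((HWd y hy).fun_mul Ha3).fun_mul Hd)
    rw [HPhi.fderiv]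
    simp only [ContinuousLinearMap.sub_apply, ContinuousLinearMap.neg_apply,
      ContinuousLinearMap.add_apply, ContinuousLinearMap.smul_apply,
      ContinuousLinearMap.comp_apply, ContinuousLinearMap.flip_apply,
      ContinuousLinearMap.coe_id', id_eq, innerSL_apply_apply, smul_eq_mul]
    ring
  -- symmetry of the third derivative in the first two slots
  have S2 : ∀ (a h' k : EuclideanSpace ℝ (Fin n)), C h' k a = C k h' a := by
    intro a h' k
    set M := (ContinuousLinearMap.compL ℝ (EuclideanSpace ℝ (Fin n))
        (EuclideanSpace ℝ (Fin n) →L[ℝ] ℝ) ℝ) (ContinuousLinearMap.apply ℝ ℝ a) with hM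
    have hφ2 : ContDiffAt ℝ 2 (fun z => fderiv ℝ u z a) y :=
      ((H1 y hy).fderiv_right (m := 2) (by norm_num)).continuousLinearMap_comp
        (ContinuousLinearMap.apply ℝ ℝ a)
    have hsymφ := hφ2.isSymmSndFDerivAt (by simp)
    have hφd : ∀ z ∈ Ω, HasFDerivAt (fun w => fderiv ℝ u w a) (M (B z)) z := by
      intro z hz
      have h := (H3 z hz).clm_apply (hasFDerivAt_const a z)
      refine h.congr_fderiv ?_
      ext k'
      simp [hM]
    have EVφ : (fderiv ℝ (fun w => fderiv ℝ u w a)) =ᶠ[nhds y] (fun z => M (B z)) := by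
      filter_upwards [hΩ.mem_nhds hy] with z hz
      exact (hφd z hz).fderiv
    have hMB := HasFDerivAt.comp (g := fun L => M L) y M.hasFDerivAt (H4 y hy)
    have h2 : fderiv ℝ (fderiv ℝ (fun w => fderiv ℝ u w a)) y = M.comp C := by
      rw [EVφ.fderiv_eq]
      exact hMB.fderiv
    have h3 := hsymφ h' k
    rw [h2] at h3
    simpa [hM] using h3
  -- the trace of the derivative of B in the last two slots vanishes
  have HLi : ∀ i : Fin n, HasFDerivAt (fun z => B z (ee n i) (ee n i))
      ((C.flip (ee n i)).flip (ee n i)) y := by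
    intro i
    have h := ((H4 y hy).clm_apply (hasFDerivAt_const (ee n i) y)).clm_apply
      (hasFDerivAt_const (ee n i) y)
    refine h.congr_fderiv ?_
    ext h'
    simp [ContinuousLinearMap.flip_apply, hC]
  have EVL : (fun z => ∑ i, B z (ee n i) (ee n i)) =ᶠ[nhds y] (fun _ => (0 : ℝ)) := by
    filter_upwards [hΩ.mem_nhds hy] with z hz
    rw [← hlap_sum z hz]
    exact hharm z hz
  have HL := HasFDerivAt.fun_sum (u := (Finset.univ : Finset (Fin n))) (fun i _ => HLi i)
  have h0 : (∑ i, (C.flip (ee n i)).flip (ee n i)) = 0 := by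
    rw [← HL.fderiv, EVL.fderiv_eq]
    simp
  have SB : ∀ h' : EuclideanSpace ℝ (Fin n), ∑ i, C h' (ee n i) (ee n i) = 0 := by
    intro h'
    have := congrArg (fun L : EuclideanSpace ℝ (Fin n) →L[ℝ] ℝ => L h') h0
    simpa [ContinuousLinearMap.sum_apply, ContinuousLinearMap.flip_apply] using this
  have SC : ∑ i, C (ee n i) y (ee n i) = 0 := by
    have hterm : ∀ i : Fin n, C (ee n i) y (ee n i)
        = ∑ j, y j * C (ee n i) (ee n j) (ee n i) := by
      intro i
      have h := clm_expand ((C (ee n i)).flip (ee n i)) y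
      simpa using h
    rw [Finset.sum_congr rfl fun i _ => hterm i, Finset.sum_comm]
    have hj : ∀ j : Fin n, ∑ i, y j * C (ee n i) (ee n j) (ee n i) = 0 := by
      intro j
      rw [← Finset.mul_sum]
      have hsw : ∑ i, C (ee n i) (ee n j) (ee n i) = ∑ i, C (ee n j) (ee n i) (ee n i) :=
        Finset.sum_congr rfl fun i _ => S2 (ee n i) (ee n i) (ee n j)
      rw [hsw, SB (ee n j)]
      ring
    rw [Finset.sum_congr rfl fun j _ => hj j]
    simp
  -- inner product computations
  have hip : ∀ i : Fin n, (⟪y, ee n i⟫ : ℝ) = y i := by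
    intro i
    simp [ee, EuclideanSpace.inner_single_right]
  have hb1 : ∀ i : Fin n, (⟪ee n i, ee n i⟫ : ℝ) = 1 := by
    intro i
    simp [ee, EuclideanSpace.inner_single_right, EuclideanSpace.single_apply]
  have hyy : ∑ i, y i * y i = ‖y‖ ^ 2 := by
    have h := clm_expand (innerSL ℝ y) y
    simp only [innerSL_apply_apply] at h
    rw [real_inner_self_eq_norm_sq] at h
    simp only [hip] at h
    exact h.symm
  -- assembling the Laplacian of v
  have key : lap v y = 2 * ‖y‖⁻¹ ^ 3 * B y y y + (3 - (n : ℝ)) * (W y * ‖y‖⁻¹ ^ 3) := by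
    rw [lap_eq]
    have hstep : ∀ i : Fin n,
        -(‖y‖⁻¹ * (B y (ee n i) (ee n i)
          + C (ee n i) y (ee n i)))
        + ‖y‖⁻¹ ^ 3 * ⟪y, ee n i⟫
            * B y y (ee n i)
        - W y * ‖y‖⁻¹ ^ 3 * ⟪ee n i, ee n i⟫
        - ⟪y, ee n i⟫
            * (W y * (-(3 * ‖y‖⁻¹ ^ 5 * ⟪y, ee n i⟫))
              + ‖y‖⁻¹ ^ 3 * (-(B y (ee n i) y)))
        = (-‖y‖⁻¹) * B y (ee n i) (ee n i)
          + (-‖y‖⁻¹) * C (ee n i) y (ee n i)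
          + (2 * ‖y‖⁻¹ ^ 3) * (y i * B y y (ee n i))
          + (-(W y * ‖y‖⁻¹ ^ 3)) * 1
          + (3 * W y * ‖y‖⁻¹ ^ 5) * (y i * y i) := by
      intro i
      rw [hip i, hb1 i, Hsym y hy (ee n i) y]
      ring
    rw [Finset.sum_congr rfl fun i _ => (PSI i).trans (hstep i)]
    rw [Finset.sum_add_distrib, Finset.sum_add_distrib, Finset.sum_add_distrib,
      Finset.sum_add_distrib]
    rw [← Finset.mul_sum, ← Finset.mul_sum, ← Finset.mul_sum, ← Finset.mul_sum,
      ← Finset.mul_sum]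
    rw [← hlap_sum y hy, hharm y hy, SC, ← clm_expand (B y y) y, hyy]
    simp only [Finset.sum_const, Finset.card_univ, Fintype.card_fin, nsmul_eq_mul, mul_one]
    field_simp
    ring
  -- the gradient term
  have hg : (⟪y, gradient v y⟫ : ℝ) = fderiv ℝ v y y := by
    rw [real_inner_comm]
    exact InnerProductSpace.toDual_symm_apply
  have hvy : v y = W y * ‖y‖⁻¹ := by rw [hveq]
  rw [key, hg, HVs y hy y, hvy, real_inner_self_eq_norm_sq]
  field_simp
  ring
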